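/- arXiv:2106.07830 — 3 statements merged into one kernel-verified Lean document; each statement's English description precedes it below -/
import Mathlib

section
/- There exist symmetric positive definite matrices H₁, H₂ and positive diagonal matrices C₁, C₂ such that H₁C₁ + H₂C₂ has a negative real eigenvalue. -/
open Matrix Polynomial

lemma posdef_fin_two (a b d : ℝ) (ha : 0 < a) (hdet : 0 < a * d - b * b) :
    (!![a, b; b, d] : Matrix (Fin 2) (Fin 2) ℝ).PosDef := by
  rw [Matrix.posDef_iff_dotProduct_mulVec]
  constructor
  · ext i j
    fin_cases i <;> fin_cases j <;> simp [Matrix.conjTranspose_apply]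
  · intro x hx
    have key : star x ⬝ᵥ (!![a, b; b, d] *ᵥ x) =
        a * (x 0)^2 + 2 * b * (x 0 * x 1) + d * (x 1)^2 := by
      simp [dotProduct, mulVec, Fin.sum_univ_two]
      ring
    rw [key]
    rcases eq_or_ne (x 1) 0 with h1 | h1
    · have h0 : x 0 ≠ 0 := by
        intro h0
        apply hx
        ext i; fin_cases i <;> simp [h0, h1]
      rw [h1]
      have := mul_pos ha (mul_self_pos.2 h0)
      nlinarith [this]
    · nlinarith [sq_nonneg (a * x 0 + b * x 1), mul_pos hdet (mul_self_pos.2 h1), sq_nonneg (x 1)]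

/-- There exist symmetric positive definite `H₁, H₂` and positive diagonal `C₁, C₂` such
that `H₁C₁ + H₂C₂` has a negative real eigenvalue. -/
theorem stmt_7 :
    ∃ H₁ H₂ C₁ C₂ : Matrix (Fin 2) (Fin 2) ℝ,
      H₁.PosDef ∧ H₂.PosDef ∧
      C₁.IsDiag ∧ C₂.IsDiag ∧ (∀ i, 0 < C₁ i i) ∧ (∀ i, 0 < C₂ i i) ∧
      ∃ μ : ℝ, μ < 0 ∧ (H₁ * C₁ + H₂ * C₂).charpoly.IsRoot μ := by
  refine ⟨!![10, 1; 1, 1/5], !![10/39, 1; 1, 31/5],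
    !![1/20, 0; 0, 19/10], !![39/20, 0; 0, 1/10], ?_, ?_, ?_, ?_, ?_, ?_, -1, by norm_num, ?_⟩
  · exact posdef_fin_two 10 1 (1/5) (by norm_num) (by norm_num)
  · exact posdef_fin_two (10/39) 1 (31/5) (by norm_num) (by norm_num)
  · intro i j hij; fin_cases i <;> fin_cases j <;> simp_all
  · intro i j hij; fin_cases i <;> fin_cases j <;> simp_all
  · intro i; fin_cases i <;> norm_num
  · intro i; fin_cases i <;> norm_num
  · have hM : (!![10, 1; 1, 1/5] * !![1/20, 0; 0, 19/10] +
        !![10/39, 1; 1, 31/5] * !![39/20, 0; 0, 1/10] : Matrix (Fin 2) (Fin 2) ℝ)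
        = !![1, 2; 2, 1] := by
      ext i j; fin_cases i <;> fin_cases j <;>
        simp [Matrix.mul_apply, Fin.sum_univ_two] <;> norm_num
    rw [hM]
    rw [Matrix.charpoly, Matrix.det_fin_two]
    simp [Matrix.charmatrix_apply_eq, Matrix.charmatrix_apply_ne, Polynomial.IsRoot]
    norm_num
end

section
/- For a symmetric positive semidefinite matrix H and a diagonal matrix C with diagonal entries in (0,1], every eigenvalue of HC satisfies λⱼ(HC) ≤ λⱼ(H), where eigenvalues are ordered decreasingly. -/
open Matrix Polynomial

lemma det_scalar_sub_mul_comm {m : ℕ} {K : Type*} [Field K] (x : K) (hx : x ≠ 0)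
    (P Q : Matrix (Fin m) (Fin m) K) :
    ((Matrix.scalar (Fin m) x) - P * Q).det = ((Matrix.scalar (Fin m) x) - Q * P).det := by
  have hsc : (Matrix.scalar (Fin m) x) = x • (1 : Matrix (Fin m) (Fin m) K) := by
    ext i j; by_cases h : i = j <;>
      simp [h, Matrix.scalar_apply, Matrix.diagonal_apply, Matrix.one_apply]
  have h1 : x • (1 : Matrix (Fin m) (Fin m) K) - P * Q
      = x • ((1 : Matrix (Fin m) (Fin m) K) - (x⁻¹ • P) * Q) := by
    rw [smul_sub, Matrix.smul_mul, smul_smul, mul_inv_cancel₀ hx, one_smul]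
  have h2 : x • (1 : Matrix (Fin m) (Fin m) K) - Q * P
      = x • ((1 : Matrix (Fin m) (Fin m) K) - Q * (x⁻¹ • P)) := by
    rw [smul_sub, Matrix.mul_smul, smul_smul, mul_inv_cancel₀ hx, one_smul]
  rw [hsc, h1, h2, Matrix.det_smul, Matrix.det_smul, Matrix.det_one_sub_mul_comm]

lemma charpoly_mul_comm' {m : ℕ} (A B : Matrix (Fin m) (Fin m) ℝ) :
    (A * B).charpoly = (B * A).charpoly := by
  classical
  have hf : Function.Injective (algebraMap ℝ[X] (RatFunc ℝ)) :=
    IsFractionRing.injective ℝ[X] (RatFunc ℝ)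
  apply hf
  set f : ℝ[X] →+* RatFunc ℝ := algebraMap ℝ[X] (RatFunc ℝ) with hfdef
  set g : ℝ →+* RatFunc ℝ := f.comp Polynomial.C with hgdef
  have key : ∀ M : Matrix (Fin m) (Fin m) ℝ, f M.charpoly
      = ((Matrix.scalar (Fin m) (f X)) - (M.map g)).det := by
    intro M
    rw [Matrix.charpoly, RingHom.map_det]
    congr 1
    ext i j
    by_cases h : i = j
    · subst h
      simp [charmatrix_apply_eq, Matrix.scalar_apply, Matrix.diagonal_apply_eq, hgdef]
    · simp [charmatrix_apply_ne _ _ _ h, Matrix.scalar_apply, Matrix.diagonal_apply_ne _ h, hgdef]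
  have hx : (f X : RatFunc ℝ) ≠ 0 := by
    simp only [ne_eq, map_eq_zero_iff _ hf]
    exact Polynomial.X_ne_zero
  show f (A * B).charpoly = f (B * A).charpoly
  rw [key, key, Matrix.map_mul, Matrix.map_mul, det_scalar_sub_mul_comm _ hx]

lemma charpoly_diagonal' {m : ℕ} (d : Fin m → ℝ) :
    (Matrix.diagonal d).charpoly = ∏ i, (X - C (d i)) := by
  have h : charmatrix (Matrix.diagonal d) = Matrix.diagonal (fun i => (X : ℝ[X]) - C (d i)) := by
    ext i j
    by_cases h : i = j
    · subst h; simp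
    · simp [charmatrix_apply_ne _ _ _ h, Matrix.diagonal_apply_ne _ h]
  rw [Matrix.charpoly, h, Matrix.det_diagonal]

lemma roots_charpoly_herm {m : ℕ} {A : Matrix (Fin m) (Fin m) ℝ} (hA : A.IsHermitian) :
    A.charpoly.roots = Multiset.map hA.eigenvalues Finset.univ.val := by
  have h1 : A.charpoly = ∏ i, (X - C (hA.eigenvalues i)) := by
    conv_lhs => rw [hA.spectral_theorem]
    rw [Unitary.conjStarAlgAut_apply]
    rw [mul_assoc, charpoly_mul_comm', mul_assoc,
      show (star (hA.eigenvectorUnitary : Matrix (Fin m) (Fin m) ℝ)) *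
        (hA.eigenvectorUnitary : Matrix (Fin m) (Fin m) ℝ) = 1 from
      Unitary.coe_star_mul_self _, Matrix.mul_one]
    rw [show (RCLike.ofReal ∘ hA.eigenvalues : Fin m → ℝ) = hA.eigenvalues from rfl]
    exact charpoly_diagonal' _
  rw [h1]
  have : (∏ i, ((X : ℝ[X]) - C (hA.eigenvalues i)))
      = (Multiset.map (fun a : ℝ => X - C a) (Multiset.map hA.eigenvalues Finset.univ.val)).prod := by
    rw [Multiset.map_map]
    rfl
  rw [this, Polynomial.roots_multiset_prod_X_sub_C]

open Matrix Polynomial Module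
open scoped RealInnerProductSpace

variable {m : ℕ} {A : Matrix (Fin m) (Fin m) ℝ} (hA : A.IsHermitian)

lemma toEuclideanLin_eigen (j : Fin m) :
    Matrix.toEuclideanLin A (hA.eigenvectorBasis j)
      = hA.eigenvalues j • hA.eigenvectorBasis j := by
  apply (WithLp.equiv 2 (Fin m → ℝ)).injective
  simpa [Matrix.toEuclideanLin_apply] using hA.mulVec_eigenvectorBasis j

lemma quad_form_eq (x : EuclideanSpace ℝ (Fin m)) :
    ⟪x, Matrix.toEuclideanLin A x⟫ = ∑ i, hA.eigenvalues i * (hA.eigenvectorBasis.repr x i)^2 := by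
  set b := hA.eigenvectorBasis
  set c := b.repr x with hc
  conv_lhs => rw [← b.sum_repr x]
  rw [map_sum, inner_sum]
  have hx : ∀ i : Fin m, ⟪(∑ j, c j • b j : EuclideanSpace ℝ (Fin m)), b i⟫ = c i := by
    intro i
    rw [b.sum_repr x, real_inner_comm, ← OrthonormalBasis.repr_apply_apply]
  congr 1
  ext i
  rw [LinearMap.map_smul, toEuclideanLin_eigen hA, smul_smul, real_inner_smul_right, hx i]
  ring

lemma repr_eq_zero_of_mem_span {s : Finset (Fin m)} {x : EuclideanSpace ℝ (Fin m)}
    (hx : x ∈ Submodule.span ℝ (hA.eigenvectorBasis '' ↑s)) {i : Fin m} (hi : i ∉ s) :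
    hA.eigenvectorBasis.repr x i = 0 := by
  set b := hA.eigenvectorBasis
  rw [OrthonormalBasis.repr_apply_apply]
  induction hx using Submodule.span_induction with
  | mem y hy =>
    obtain ⟨k, hk, rfl⟩ := hy
    exact b.orthonormal.2 (fun h => hi (h ▸ hk))
  | zero => simp
  | add y z _ _ hy hz => rw [inner_add_right, hy, hz, add_zero]
  | smul a y _ hy => rw [real_inner_smul_right, hy, mul_zero]

lemma sum_repr_sq_eq (x : EuclideanSpace ℝ (Fin m)) :
    ∑ i, (hA.eigenvectorBasis.repr x i)^2 = ⟪x, x⟫ := by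
  calc ∑ i, (hA.eigenvectorBasis.repr x i)^2
      = ⟪hA.eigenvectorBasis.repr x, hA.eigenvectorBasis.repr x⟫ := by
        simp only [PiLp.inner_apply, RCLike.inner_apply, starRingEnd_apply, star_trivial, sq]
    _ = ⟪x, x⟫ := hA.eigenvectorBasis.repr.inner_map_map x x

lemma finrank_span_eigen (s : Finset (Fin m)) :
    finrank ℝ (Submodule.span ℝ (hA.eigenvectorBasis '' ↑s)) = s.card := by
  classical
  set b := hA.eigenvectorBasis
  have hinj : Function.Injective b := by
    rw [← b.coe_toBasis]; exact b.toBasis.injective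
  rw [← Finset.coe_image]
  rw [finrank_span_finset_eq_card, Finset.card_image_of_injective _ hinj]
  exact ((b.orthonormal.linearIndependent).linearIndepOn_id).mono
    (by
      intro y hy
      obtain ⟨k, -, rfl⟩ := Finset.mem_image.mp (Finset.mem_coe.mp hy)
      exact Set.mem_range_self k)

lemma countP_ge_of_sort (M : Multiset ℝ) (j : ℕ) (hj : j < Multiset.card M) :
    j + 1 ≤ Multiset.countP (fun y => (M.sort (· ≥ ·)).getD j 0 ≤ y) M := by
  set l := M.sort (· ≥ ·) with hl
  have hlen : l.length = Multiset.card M := Multiset.length_sort _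
  have hjl : j < l.length := hlen ▸ hj
  have hsorted : List.Pairwise (· ≥ ·) l := Multiset.pairwise_sort ..
  have hMl : (l : Multiset ℝ) = M := Multiset.sort_eq _ _
  rw [← hMl, Multiset.coe_countP]
  have hsub : (l.take (j+1)).Sublist l := List.take_sublist _ _
  calc j + 1 = List.countP (fun y => decide (l.getD j 0 ≤ y)) (l.take (j+1)) := by
        rw [List.countP_eq_length.mpr, List.length_take]
        · omega
        · intro y hy
          obtain ⟨i, hi, rfl⟩ := List.mem_iff_getElem.mp hy
          rw [List.getElem_take]
          rw [List.getD_eq_getElem l 0 hjl]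
          simp only [decide_eq_true_eq]
          have hij : i < j + 1 := by
            have := hi; simp [List.length_take] at this; omega
          rcases Nat.lt_or_ge i j with h | h
          · exact (List.pairwise_iff_getElem.mp hsorted) i j _ _ h
          · have : i = j := by omega
            subst this; exact le_refl _
    _ ≤ _ := hsub.countP_le

lemma countP_le_of_sort (M : Multiset ℝ) (j : ℕ) (hj : j < Multiset.card M) :
    Multiset.card M - j ≤ Multiset.countP (fun y => y ≤ (M.sort (· ≥ ·)).getD j 0) M := by
  set l := M.sort (· ≥ ·) with hl
  have hlen : l.length = Multiset.card M := Multiset.length_sort _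
  have hjl : j < l.length := hlen ▸ hj
  have hsorted : List.Pairwise (· ≥ ·) l := Multiset.pairwise_sort ..
  have hMl : (l : Multiset ℝ) = M := Multiset.sort_eq _ _
  rw [← hMl, Multiset.coe_countP, Multiset.coe_card]
  have hsub : (l.drop j).Sublist l := List.drop_sublist _ _
  calc l.length - j
      = List.countP (fun y => decide (y ≤ l.getD j 0)) (l.drop j) := by
        rw [List.countP_eq_length.mpr, List.length_drop]
        intro y hy
        obtain ⟨i, hi, rfl⟩ := List.mem_iff_getElem.mp hy
        rw [List.getElem_drop]
        rw [List.getD_eq_getElem l 0 hjl]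
        simp only [decide_eq_true_eq]
        rcases Nat.eq_or_lt_of_le (Nat.le_add_right j i) with h | h
        · obtain rfl : i = 0 := by omega
          simp
        · exact (List.pairwise_iff_getElem.mp hsorted) j (j+i) hjl
            (by simp [List.length_drop] at hi; omega) h
    _ ≤ _ := hsub.countP_le

lemma inner_toEuclideanLin (M : Matrix (Fin m) (Fin m) ℝ) (x : EuclideanSpace ℝ (Fin m)) :
    ⟪x, Matrix.toEuclideanLin M x⟫
      = (WithLp.equiv 2 (Fin m → ℝ) x) ⬝ᵥ (M *ᵥ (WithLp.equiv 2 (Fin m → ℝ) x)) := by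
  rw [EuclideanSpace.inner_eq_star_dotProduct]
  simp
  exact dotProduct_comm _ _

lemma eig_le_of_posSemidef_sub {A B : Matrix (Fin m) (Fin m) ℝ}
    (hA : A.IsHermitian) (hB : B.IsHermitian) (hBA : (B - A).PosSemidef) (j : Fin m) :
    ((Multiset.map hA.eigenvalues Finset.univ.val).sort (· ≥ ·)).getD j 0 ≤
    ((Multiset.map hB.eigenvalues Finset.univ.val).sort (· ≥ ·)).getD j 0 := by
  classical
  set MA := Multiset.map hA.eigenvalues Finset.univ.val with hMA
  set MB := Multiset.map hB.eigenvalues Finset.univ.val with hMB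
  set a := (MA.sort (· ≥ ·)).getD j 0 with ha
  set bb := (MB.sort (· ≥ ·)).getD j 0 with hbb
  have hcardMA : Multiset.card MA = m := by simp [hMA]
  have hcardMB : Multiset.card MB = m := by simp [hMB]
  set sA : Finset (Fin m) := Finset.univ.filter (fun i => a ≤ hA.eigenvalues i) with hsA
  set sB : Finset (Fin m) := Finset.univ.filter (fun i => hB.eigenvalues i ≤ bb) with hsB
  have hcardA : (j : ℕ) + 1 ≤ sA.card := by
    have h1 := countP_ge_of_sort MA j (by rw [hcardMA]; exact j.isLt)
    rwa [hMA, Multiset.countP_map, ← Finset.filter_val, ← Finset.card_def] at h1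
  have hcardB : m - (j : ℕ) ≤ sB.card := by
    have h1 := countP_le_of_sort MB j (by rw [hcardMB]; exact j.isLt)
    rw [hMB, Multiset.countP_map, ← Finset.filter_val, ← Finset.card_def] at h1
    rwa [hcardMB] at h1
  set V := Submodule.span ℝ (hA.eigenvectorBasis '' ↑sA) with hV
  set W := Submodule.span ℝ (hB.eigenvectorBasis '' ↑sB) with hW
  have hdim : 0 < finrank ℝ ↥(V ⊓ W) := by
    have hsum := Submodule.finrank_sup_add_finrank_inf_eq V W
    have hle : finrank ℝ ↥(V ⊔ W) ≤ m := by
      have := Submodule.finrank_le (V ⊔ W)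
      rwa [finrank_euclideanSpace_fin] at this
    have hVdim : finrank ℝ ↥V = sA.card := finrank_span_eigen hA sA
    have hWdim : finrank ℝ ↥W = sB.card := finrank_span_eigen hB sB
    have hj : (j : ℕ) < m := j.isLt
    omega
  have : Nontrivial ↥(V ⊓ W) := Module.finrank_pos_iff.mp hdim
  obtain ⟨x, hx0⟩ := exists_ne (0 : ↥(V ⊓ W))
  have hxV : (x : EuclideanSpace ℝ (Fin m)) ∈ V := x.2.1
  have hxW : (x : EuclideanSpace ℝ (Fin m)) ∈ W := x.2.2
  set x0 : EuclideanSpace ℝ (Fin m) := (x : EuclideanSpace ℝ (Fin m)) with hx0def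
  have hx0ne : x0 ≠ 0 := fun h => hx0 (Subtype.ext h)
  have hpos : 0 < ⟪x0, x0⟫ := by
    rw [real_inner_self_eq_norm_sq]
    exact pow_pos (norm_pos_iff.mpr hx0ne) 2
  have hlow : a * ⟪x0, x0⟫ ≤ ⟪x0, Matrix.toEuclideanLin A x0⟫ := by
    rw [quad_form_eq hA, ← sum_repr_sq_eq hA, Finset.mul_sum]
    apply Finset.sum_le_sum
    intro i _
    by_cases hi : i ∈ sA
    · exact mul_le_mul_of_nonneg_right (by simpa [hsA] using hi) (sq_nonneg _)
    · rw [repr_eq_zero_of_mem_span hA hxV hi]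
      simp
  have hhigh : ⟪x0, Matrix.toEuclideanLin B x0⟫ ≤ bb * ⟪x0, x0⟫ := by
    rw [quad_form_eq hB, ← sum_repr_sq_eq hB, Finset.mul_sum]
    apply Finset.sum_le_sum
    intro i _
    by_cases hi : i ∈ sB
    · exact mul_le_mul_of_nonneg_right (by simpa [hsB] using hi) (sq_nonneg _)
    · rw [repr_eq_zero_of_mem_span hB hxW hi]
      simp
  have hmid : ⟪x0, Matrix.toEuclideanLin A x0⟫ ≤ ⟪x0, Matrix.toEuclideanLin B x0⟫ := by
    rw [inner_toEuclideanLin, inner_toEuclideanLin]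
    have := hBA.dotProduct_mulVec_nonneg (WithLp.equiv 2 (Fin m → ℝ) x0)
    rw [star_trivial, Matrix.sub_mulVec, dotProduct_sub, sub_nonneg] at this
    exact this
  have h : a * ⟪x0, x0⟫ ≤ bb * ⟪x0, x0⟫ := le_trans hlow (le_trans hmid hhigh)
  exact le_of_mul_le_mul_right h hpos

open scoped MatrixOrder Matrix.Norms.L2Operator

/-- For symmetric PSD `H` and diagonal `C` with entries in `(0,1]`, the matrices `H` and
`H*C` each have `n` real eigenvalues (roots of the characteristic polynomial, with
multiplicity), and when both spectra are ordered decreasingly we have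
`λⱼ(HC) ≤ λⱼ(H)` for every `j`. -/
theorem stmt_8 (n : ℕ) (H C : Matrix (Fin n) (Fin n) ℝ)
    (hH : H.PosSemidef) (hC : C.IsDiag) (hC1 : ∀ i, 0 < C i i) (hC2 : ∀ i, C i i ≤ 1) :
    Multiset.card (H * C).charpoly.roots = n ∧
    Multiset.card H.charpoly.roots = n ∧
    ∀ j : Fin n,
      (((H * C).charpoly.roots.sort (· ≥ ·)).getD j 0) ≤
        ((H.charpoly.roots.sort (· ≥ ·)).getD j 0) := by
  classical
  set R := CFC.sqrt H with hRdef
  have hR : R.PosSemidef := (CFC.sqrt_nonneg H).posSemidef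
  have hRH : R * R = H := CFC.sqrt_mul_sqrt_self H hH.nonneg
  have hRherm : Rᴴ = R := hR.1
  set S := R * C * R with hSdef
  have hcp : (H * C).charpoly = S.charpoly := by
    rw [← hRH, Matrix.mul_assoc, charpoly_mul_comm']
  have hCpsd : C.PosSemidef := by
    rw [← hC.diagonal_diag]
    exact Matrix.PosSemidef.diagonal (fun i => (hC1 i).le)
  have hS : S.PosSemidef := by
    have := hCpsd.mul_mul_conjTranspose_same R
    rwa [hRherm] at this
  have hHS : (H - S).PosSemidef := by
    have h1C : (1 - C).PosSemidef := by
      rw [show (1 : Matrix (Fin n) (Fin n) ℝ) - C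
          = Matrix.diagonal (fun i => 1 - C i i) from by
        conv_lhs => rw [← hC.diagonal_diag, ← Matrix.diagonal_one]
        rw [Matrix.diagonal_sub]
        rfl]
      exact Matrix.PosSemidef.diagonal (fun i => by simpa using hC2 i)
    have := h1C.mul_mul_conjTranspose_same R
    rw [hRherm] at this
    rwa [Matrix.mul_sub, Matrix.mul_one, Matrix.sub_mul, hRH] at this
  have rootsHC : (H * C).charpoly.roots
      = Multiset.map hS.1.eigenvalues Finset.univ.val := by
    rw [hcp]; exact roots_charpoly_herm hS.1
  have rootsH : H.charpoly.roots
      = Multiset.map hH.1.eigenvalues Finset.univ.val := roots_charpoly_herm hH.1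
  refine ⟨by simp [rootsHC], by simp [rootsH], fun j => ?_⟩
  rw [rootsHC, rootsH]
  exact eig_le_of_posSemidef_sub hS.1 hH.1 hHS j
end

section
/- For a symmetric positive definite matrix H and a diagonal matrix C with all diagonal entries strictly less than 1 (and positive), each eigenvalue of HC is strictly less than the corresponding eigenvalue of H: λⱼ(HC) < λⱼ(H). -/
open Matrix

section Aux
open Polynomial

variable {n : ℕ}

lemma my_charpoly_mul_comm (A B : Matrix (Fin n) (Fin n) ℝ) (hA : A.det ≠ 0) :
    (A * B).charpoly = (B * A).charpoly := by
  have key : charmatrix (A * B) * A.map Polynomial.C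
      = A.map Polynomial.C * charmatrix (B * A) := by
    show (Matrix.scalar (Fin n) X - RingHom.mapMatrix (C : ℝ →+* ℝ[X]) (A * B)) * A.map C
        = A.map C * (Matrix.scalar (Fin n) X - RingHom.mapMatrix (C : ℝ →+* ℝ[X]) (B * A))
    rw [sub_mul, mul_sub]
    congr 1
    · exact (scalar_commute X (fun r => Commute.all X r) (A.map C))
    · simp only [RingHom.mapMatrix_apply, Matrix.map_mul]
      rw [mul_assoc]
  have hdet : (A.map (C : ℝ →+* ℝ[X])).det ≠ 0 := by
    have : (C : ℝ →+* ℝ[X]) A.det = ((C : ℝ →+* ℝ[X]).mapMatrix A).det := RingHom.map_det _ _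
    rw [RingHom.mapMatrix_apply] at this
    rw [← this]
    simpa using hA
  have h2 := congrArg Matrix.det key
  rw [det_mul, det_mul, mul_comm ((A.map (C : ℝ →+* ℝ[X])).det)] at h2
  exact mul_right_cancel₀ hdet h2

lemma my_charpoly_diagonal (d : Fin n → ℝ) :
    (diagonal d).charpoly = ∏ i, (X - C (d i)) := by
  rw [Matrix.charpoly_of_upperTriangular _ (Matrix.blockTriangular_diagonal d)]
  simp [diagonal_apply_eq]

lemma my_roots_diag (d : Fin n → ℝ) :
    (diagonal d).charpoly.roots = Multiset.map d Finset.univ.val := by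
  rw [my_charpoly_diagonal]
  have : (∏ i, (X - C (d i))) = ((Finset.univ.val.map d).map (fun a => X - C a)).prod := by
    rw [Multiset.map_map]
    rfl
  rw [this, Polynomial.roots_multiset_prod_X_sub_C]

lemma my_charpoly_hermitian (A : Matrix (Fin n) (Fin n) ℝ) (hA : A.IsHermitian) :
    A.charpoly.roots = Multiset.map hA.eigenvalues Finset.univ.val := by
  set U : Matrix (Fin n) (Fin n) ℝ := (hA.eigenvectorUnitary : Matrix (Fin n) (Fin n) ℝ) with hU
  have hstar : star U * U = 1 := (Matrix.mem_unitaryGroup_iff'.mp hA.eigenvectorUnitary.2)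
  have hdetU : U.det ≠ 0 := by
    intro h
    have := congrArg Matrix.det hstar
    rw [det_mul, h, mul_zero] at this
    simp at this
  have hspec := hA.spectral_theorem
  have heq : A.charpoly = (diagonal (RCLike.ofReal ∘ hA.eigenvalues)).charpoly := by
    conv_lhs => rw [hspec, Unitary.conjStarAlgAut_apply]
    rw [← hU, mul_assoc]
    rw [my_charpoly_mul_comm _ _ hdetU, mul_assoc, hstar, mul_one]
  have : (RCLike.ofReal ∘ hA.eigenvalues : Fin n → ℝ) = hA.eigenvalues := by
    funext i; simp [RCLike.ofReal]
  rw [heq, this, my_roots_diag]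

lemma exists_sorted_eigs (A : Matrix (Fin n) (Fin n) ℝ) (hA : A.IsHermitian) :
    ∃ (μ : Fin n → ℝ) (v : Fin n → (Fin n → ℝ)),
      Antitone μ ∧ (∀ k l, v k ⬝ᵥ v l = if k = l then 1 else 0) ∧
      (∀ k, A *ᵥ v k = μ k • v k) ∧
      A.charpoly.roots.sort (· ≥ ·) = List.ofFn μ := by
  classical
  set f := hA.eigenvalues with hf
  set e : Fin n ≃ Fin n := (Fin.revPerm).trans (Tuple.sort f) with he
  set μ : Fin n → ℝ := fun i => f (e i) with hμ
  have hmono : Monotone (f ∘ Tuple.sort f) := Tuple.monotone_sort f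
  have hanti : Antitone μ := by
    intro i j hij
    exact hmono (by simpa using Fin.rev_le_rev.mpr hij)
  refine ⟨μ, fun i => ⇑(hA.eigenvectorBasis (e i)), hanti, ?_, ?_, ?_⟩
  · intro k l
    have horth := hA.eigenvectorBasis.orthonormal
    rw [orthonormal_iff_ite] at horth
    have := horth (e k) (e l)
    rw [show (inner ℝ (hA.eigenvectorBasis (e k)) (hA.eigenvectorBasis (e l)) : ℝ)
        = ⇑(hA.eigenvectorBasis (e k)) ⬝ᵥ ⇑(hA.eigenvectorBasis (e l)) from by
      simp [PiLp.inner_apply, dotProduct, mul_comm]] at this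
    rw [this]
    simp [e.injective.eq_iff]
  · intro k
    exact hA.mulVec_eigenvectorBasis (e k)
  · have hperm : (List.ofFn μ : Multiset ℝ) = A.charpoly.roots := by
      rw [my_charpoly_hermitian A hA]
      rw [List.ofFn_eq_map]
      have : (Multiset.ofList ((List.finRange n).map μ)) =
          Multiset.map μ (Finset.univ.val) := by
        rfl
      rw [this, hμ]
      have : Multiset.map (fun i => f (e i)) Finset.univ.val
          = Multiset.map f (Multiset.map (⇑e) Finset.univ.val) := by
        rw [Multiset.map_map]; rfl
      rw [this]
      congr 1
      have := Finset.map_univ_equiv e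
      calc Multiset.map (⇑e) Finset.univ.val = (Finset.univ.map e.toEmbedding).val := rfl
        _ = Finset.univ.val := by rw [Finset.map_univ_equiv]
    have hsorted : (List.ofFn μ).SortedGE := by
      rw [List.sortedGE_ofFn_iff]
      exact hanti
    refine List.Perm.eq_of_sortedGE (List.Pairwise.sortedGE (Multiset.pairwise_sort _ _)) hsorted ?_
    exact Multiset.coe_eq_coe.mp (by rw [Multiset.sort_eq, ← hperm])

lemma my_sum_dot {m : ℕ} (f : Fin m → Fin n → ℝ) (w : Fin n → ℝ) :
    (∑ i, f i) ⬝ᵥ w = ∑ i, f i ⬝ᵥ w := by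
  simp only [dotProduct, Finset.sum_apply, Finset.sum_mul]
  exact Finset.sum_comm

lemma my_dot_sum {m : ℕ} (w : Fin n → ℝ) (f : Fin m → Fin n → ℝ) :
    w ⬝ᵥ (∑ i, f i) = ∑ i, w ⬝ᵥ f i := by
  simp only [dotProduct, Finset.sum_apply, Finset.mul_sum]
  exact Finset.sum_comm

lemma my_mulVec_sum {m : ℕ} (A : Matrix (Fin n) (Fin n) ℝ) (f : Fin m → Fin n → ℝ) :
    A *ᵥ (∑ i, f i) = ∑ i, A *ᵥ f i := by
  simpa only [Matrix.mulVecLin_apply] using map_sum A.mulVecLin f Finset.univ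

lemma quad_eval {m : ℕ} (A : Matrix (Fin n) (Fin n) ℝ) (v : Fin m → Fin n → ℝ)
    (μ : Fin m → ℝ) (horth : ∀ k l, v k ⬝ᵥ v l = if k = l then 1 else 0)
    (heig : ∀ k, A *ᵥ v k = μ k • v k) (c : Fin m → ℝ) :
    ((∑ i, c i • v i) ⬝ᵥ A *ᵥ (∑ i, c i • v i) = ∑ i, μ i * c i ^ 2) ∧
    ((∑ i, c i • v i) ⬝ᵥ (∑ i, c i • v i) = ∑ i, c i ^ 2) := by
  constructor
  · rw [my_mulVec_sum, my_dot_sum]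
    have : ∀ l, (∑ i, c i • v i) ⬝ᵥ (A *ᵥ c l • v l) = μ l * c l ^ 2 := by
      intro l
      rw [Matrix.mulVec_smul, heig l, my_sum_dot]
      simp only [smul_dotProduct, dotProduct_smul, horth, smul_eq_mul]
      rw [Finset.sum_eq_single l]
      · simp; ring
      · intro b _ hb; simp [hb]
      · intro h; simp at h
    simp only [this]
  · rw [my_dot_sum]
    have : ∀ l, (∑ i, c i • v i) ⬝ᵥ (c l • v l) = c l ^ 2 := by
      intro l
      rw [my_sum_dot]
      simp only [smul_dotProduct, dotProduct_smul, horth, smul_eq_mul]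
      rw [Finset.sum_eq_single l]
      · simp; ring
      · intro b _ hb; simp [hb]
      · intro h; simp at h
    simp only [this]

lemma li_of_orth {m : ℕ} (v : Fin m → Fin n → ℝ)
    (horth : ∀ k l, v k ⬝ᵥ v l = if k = l then 1 else 0) : LinearIndependent ℝ v := by
  rw [Fintype.linearIndependent_iff]
  intro c hc l
  have h2 := congrArg (fun z => z ⬝ᵥ v l) hc
  simp only [my_sum_dot, smul_dotProduct, horth, smul_eq_mul,
    zero_dotProduct] at h2
  rwa [Finset.sum_eq_single l (fun b _ hb => by simp [hb]) (fun h => by simp at h),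
    if_pos rfl, mul_one] at h2

lemma weyl_strict (A B : Matrix (Fin n) (Fin n) ℝ) (hA : A.IsHermitian) (hB : B.IsHermitian)
    (h : ∀ x : Fin n → ℝ, x ≠ 0 → x ⬝ᵥ A *ᵥ x < x ⬝ᵥ B *ᵥ x) (j : Fin n) :
    (A.charpoly.roots.sort (· ≥ ·)).getD j 0 < (B.charpoly.roots.sort (· ≥ ·)).getD j 0 := by
  classical
  obtain ⟨μ, v, hμa, hvo, hve, hμl⟩ := exists_sorted_eigs A hA
  obtain ⟨ν, u, hνa, huo, hue, hνl⟩ := exists_sorted_eigs B hB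
  have hg : ∀ (g : Fin n → ℝ) (j : Fin n), (List.ofFn g).getD j 0 = g j := by
    intro g j
    rw [List.getD_eq_getElem _ _ (by simp [j.2] : (j : ℕ) < (List.ofFn g).length)]
    simp
  rw [hμl, hνl, hg, hg]
  -- subspaces
  have hjn := j.2
  let e₁ : Fin (j.1 + 1) → Fin n := fun k => ⟨k.1, by omega⟩
  let e₂ : Fin (n - j.1) → Fin n := fun k => ⟨j.1 + k.1, by omega⟩
  have he₁ : Function.Injective e₁ := by
    intro a b hab
    have := congrArg Fin.val hab
    simp only [e₁] at this
    exact Fin.ext this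
  have he₂ : Function.Injective e₂ := by
    intro a b hab
    have := congrArg Fin.val hab
    simp only [e₂] at this
    exact Fin.ext (by omega)
  have horth₁ : ∀ k l, (v ∘ e₁) k ⬝ᵥ (v ∘ e₁) l = if k = l then 1 else 0 := by
    intro k l; simp only [Function.comp_apply, hvo, he₁.eq_iff]
  have horth₂ : ∀ k l, (u ∘ e₂) k ⬝ᵥ (u ∘ e₂) l = if k = l then 1 else 0 := by
    intro k l; simp only [Function.comp_apply, huo, he₂.eq_iff]
  set U := Submodule.span ℝ (Set.range (v ∘ e₁)) with hUdef
  set W := Submodule.span ℝ (Set.range (u ∘ e₂)) with hWdef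
  have hU : Module.finrank ℝ U = j.1 + 1 := by
    rw [finrank_span_eq_card (li_of_orth _ horth₁)]; simp
  have hW : Module.finrank ℝ W = n - j.1 := by
    rw [finrank_span_eq_card (li_of_orth _ horth₂)]; simp
  have hsup : Module.finrank ℝ ↥(U ⊔ W) ≤ n := by
    refine le_trans (Submodule.finrank_le _) ?_
    simp [Module.finrank_fin_fun]
  have hsum := Submodule.finrank_sup_add_finrank_inf_eq U W
  rw [hU, hW] at hsum
  have hinf : 0 < Module.finrank ℝ ↥(U ⊓ W) := by omega
  rw [Module.finrank_pos_iff] at hinf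
  obtain ⟨y, hy⟩ := exists_ne (0 : ↥(U ⊓ W))
  set x : Fin n → ℝ := (y : Fin n → ℝ) with hxdef
  have hx0 : x ≠ 0 := fun hx => hy (Subtype.ext hx)
  have hxU : x ∈ U := y.2.1
  have hxW : x ∈ W := y.2.2
  have hdotpos : 0 < x ⬝ᵥ x := by
    obtain ⟨i, hi⟩ := Function.ne_iff.mp hx0
    exact Finset.sum_pos' (fun i _ => mul_self_nonneg _)
      ⟨i, Finset.mem_univ i, mul_self_pos.mpr (by simpa using hi)⟩
  -- lower bound for A
  obtain ⟨c, hc⟩ := (Submodule.mem_span_range_iff_exists_fun ℝ).mp hxU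
  have hq := quad_eval A (v ∘ e₁) (μ ∘ e₁) horth₁ (fun k => hve (e₁ k)) c
  rw [hc] at hq
  have bound1 : μ j * (x ⬝ᵥ x) ≤ x ⬝ᵥ A *ᵥ x := by
    rw [hq.1, hq.2, Finset.mul_sum]
    refine Finset.sum_le_sum fun i _ => ?_
    have : μ j ≤ (μ ∘ e₁) i := by
      refine hμa ?_
      have : i.1 ≤ j.1 := by omega
      exact this
    exact mul_le_mul_of_nonneg_right this (sq_nonneg _)
  -- upper bound for B
  obtain ⟨c', hc'⟩ := (Submodule.mem_span_range_iff_exists_fun ℝ).mp hxW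
  have hq' := quad_eval B (u ∘ e₂) (ν ∘ e₂) horth₂ (fun k => hue (e₂ k)) c'
  rw [hc'] at hq'
  have bound2 : x ⬝ᵥ B *ᵥ x ≤ ν j * (x ⬝ᵥ x) := by
    rw [hq'.1, hq'.2, Finset.mul_sum]
    refine Finset.sum_le_sum fun i _ => ?_
    have : (ν ∘ e₂) i ≤ ν j := by
      refine hνa ?_
      show j.1 ≤ j.1 + i.1
      omega
    exact mul_le_mul_of_nonneg_right this (sq_nonneg _)
  have := (lt_of_le_of_lt bound1 (h x hx0)).trans_le bound2
  exact lt_of_mul_lt_mul_right this hdotpos.le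

end Aux

/-- For symmetric positive definite `H` and diagonal `C` with entries in `(0,1)`, each
eigenvalue of `H*C` (both spectra are real and ordered decreasingly) is strictly smaller
than the corresponding eigenvalue of `H`: `λⱼ(HC) < λⱼ(H)`. -/
theorem stmt_9 (n : ℕ) (H C : Matrix (Fin n) (Fin n) ℝ)
    (hH : H.PosDef) (hC : C.IsDiag) (hC1 : ∀ i, 0 < C i i) (hC2 : ∀ i, C i i < 1) :
    Multiset.card (H * C).charpoly.roots = n ∧
    Multiset.card H.charpoly.roots = n ∧
    ∀ j : Fin n,
      (((H * C).charpoly.roots.sort (· ≥ ·)).getD j 0) <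
        ((H.charpoly.roots.sort (· ≥ ·)).getD j 0) := by

  classical
  open scoped MatrixOrder in
  set R := CFC.sqrt H with hRdef
  open scoped MatrixOrder in
  have hR : R.PosSemidef := Matrix.nonneg_iff_posSemidef.mp (CFC.sqrt_nonneg H)
  have hRh : Rᴴ = R := hR.1
  have hRt : Rᵀ = R := by rw [← Matrix.conjTranspose_eq_transpose_of_trivial, hRh]
  open scoped MatrixOrder in
  have hRR : R * R = H :=
    CFC.sqrt_mul_sqrt_self H (Matrix.nonneg_iff_posSemidef.mpr hH.posSemidef)
  have hdetH : H.det ≠ 0 := ne_of_gt hH.det_pos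
  have hdetR : R.det ≠ 0 := by
    intro h
    apply hdetH
    rw [← hRR, det_mul, h, zero_mul]
  have hCd : diagonal C.diag = C := hC.diagonal_diag
  have hCh : Cᴴ = C := by rw [← hCd]; simp [Matrix.diagonal_conjTranspose]
  have hcp : (H * C).charpoly = (R * C * R).charpoly := by
    rw [← hRR, mul_assoc, my_charpoly_mul_comm R (R * C) hdetR, mul_assoc]
  have hM : (R * C * R).IsHermitian := by
    show (R * C * R)ᴴ = R * C * R
    rw [Matrix.conjTranspose_mul, Matrix.conjTranspose_mul, hCh, hRh, ← mul_assoc]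
  have hsym : ∀ z w : Fin n → ℝ, z ⬝ᵥ (R *ᵥ w) = (R *ᵥ z) ⬝ᵥ w := by
    intro z w
    rw [Matrix.dotProduct_mulVec]
    congr 1
    rw [← Matrix.mulVec_transpose, hRt]
  have hstrict : ∀ x : Fin n → ℝ, x ≠ 0 →
      x ⬝ᵥ (R * C * R) *ᵥ x < x ⬝ᵥ H *ᵥ x := by
    intro x hx
    set y := R *ᵥ x with hydef
    have hy : y ≠ 0 := by
      intro h0
      have hq := hH.dotProduct_mulVec_pos hx
      have hHx : H *ᵥ x = 0 := by
        rw [← hRR, ← Matrix.mulVec_mulVec, ← hydef, h0, Matrix.mulVec_zero]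
      rw [hHx] at hq
      simp at hq
    have hQM : x ⬝ᵥ (R * C * R) *ᵥ x = ∑ i, C.diag i * (y i * y i) := by
      rw [← Matrix.mulVec_mulVec, ← Matrix.mulVec_mulVec, hsym, ← hydef, ← hCd]
      simp [dotProduct, Matrix.mulVec_diagonal]
      exact Finset.sum_congr rfl fun i _ => by ring
    have hQH : x ⬝ᵥ H *ᵥ x = ∑ i, y i * y i := by
      rw [← hRR, ← Matrix.mulVec_mulVec, hsym, ← hydef]
      rfl
    rw [hQM, hQH]
    obtain ⟨i, hi⟩ := Function.ne_iff.mp hy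
    refine Finset.sum_lt_sum (fun i _ => ?_) ⟨i, Finset.mem_univ i, ?_⟩
    · have h2 : C.diag i < 1 := hC2 i
      nlinarith [mul_self_nonneg (y i)]
    · have h3 : (0:ℝ) < y i * y i := mul_self_pos.mpr (by simpa using hi)
      have h2 : C.diag i < 1 := hC2 i
      nlinarith
  have hroots1 : (H * C).charpoly.roots = Multiset.map hM.eigenvalues Finset.univ.val := by
    rw [hcp]; exact my_charpoly_hermitian _ hM
  have hroots2 : H.charpoly.roots = Multiset.map hH.1.eigenvalues Finset.univ.val :=
    my_charpoly_hermitian _ hH.1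
  refine ⟨?_, ?_, ?_⟩
  · rw [hroots1]; simp
  · rw [hroots2]; simp
  · intro j
    rw [hcp]
    exact weyl_strict (R * C * R) H hM hH.1 hstrict j
end
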